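/- Let x₁,…,x₅ be five distinct points in counterclockwise order on a circle and denote ℓ_{ij} = ℓ(x_i, x_j) the chord distance. Define the geometric cross-ratio of three consecutive arcs with endpoints (p,q,r,s) as η(p,q,r,s) = (ℓ(p,q)·ℓ(r,s))/(ℓ(p,r)·ℓ(q,s)). Then η(x₁,x₃,x₄,x₅) = η(x₂,x₃,x₄,x₅)/(1 - η(x₁,x₂,x₃,x₄)). -/

import Mathlib

/-- Geometric cross-ratio of three consecutive arcs with endpoints `(p,q,r,s)`,
computed with chord (Euclidean) distances. -/
noncomputable def etaG (p q r s : ℂ) : ℝ := (dist p q * dist r s) / (dist p r * dist q s)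

open Complex in
lemma chord_abs (a b : ℝ) :
    ‖Complex.exp (a * Complex.I) - Complex.exp (b * Complex.I)‖ =
      2 * |Real.sin ((a - b) / 2)| := by
  have ha : (a : ℂ) * I = (((a + b) / 2 : ℝ) : ℂ) * I + (((a - b) / 2 : ℝ) : ℂ) * I := by
    push_cast; ring
  have hb : (b : ℂ) * I = (((a + b) / 2 : ℝ) : ℂ) * I - (((a - b) / 2 : ℝ) : ℂ) * I := by
    push_cast; ring
  have key : Complex.exp (a * I) - Complex.exp (b * I) =
      Complex.exp ((((a + b) / 2 : ℝ) : ℂ) * I) *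
        (2 * I * Complex.sin (((a - b) / 2 : ℝ) : ℂ)) := by
    rw [ha, hb, Complex.exp_add, Complex.exp_sub, Complex.sin]
    rw [show (-(((a - b) / 2 : ℝ) : ℂ) * I) = -((((a - b) / 2 : ℝ) : ℂ) * I) by ring,
      Complex.exp_neg]
    linear_combination (Complex.exp ((((a + b) / 2 : ℝ) : ℂ) * I) *
      (Complex.exp ((((a - b) / 2 : ℝ) : ℂ) * I) -
        (Complex.exp ((((a - b) / 2 : ℝ) : ℂ) * I))⁻¹)) * Complex.I_sq
  rw [key, norm_mul, Complex.norm_exp_ofReal_mul_I, one_mul, norm_mul, norm_mul,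
    Complex.norm_two, Complex.norm_I, ← Complex.ofReal_sin, Complex.norm_real, Real.norm_eq_abs]
  ring

lemma ptolemy_sin (a b c : ℝ) :
    Real.sin (a + b) * Real.sin (b + c) =
      Real.sin a * Real.sin c + Real.sin b * Real.sin (a + b + c) := by
  have h := Real.sin_sq_add_cos_sq b
  simp only [Real.sin_add, Real.cos_add]
  linear_combination (Real.sin a * Real.sin c) * h
/-- Decomposition relation `η(ab,c,d) = η(b,c,d)/(1 - η(a,b,c))` for geometric
cross-ratios of five points in counterclockwise order on a circle. -/
theorem stmt7 (z : ℂ) (r : ℝ) (hr : 0 < r) (θ : Fin 5 → ℝ)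
    (h01 : θ 0 < θ 1) (h12 : θ 1 < θ 2) (h23 : θ 2 < θ 3) (h34 : θ 3 < θ 4)
    (h40 : θ 4 < θ 0 + 2 * Real.pi)
    (x : Fin 5 → ℂ) (hx : ∀ i, x i = z + r * Complex.exp (θ i * Complex.I)) :
    etaG (x 0) (x 2) (x 3) (x 4) =
      etaG (x 1) (x 2) (x 3) (x 4) / (1 - etaG (x 0) (x 1) (x 2) (x 3)) := by
  have hpi := Real.pi_pos
  -- distances
  have hdist : ∀ i j : Fin 5, θ i < θ j → θ j - θ i < 2 * Real.pi →
      dist (x i) (x j) = 2 * r * Real.sin ((θ j - θ i) / 2) := by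
    intro i j hij hlt
    rw [hx i, hx j, Complex.dist_eq]
    have : z + ↑r * Complex.exp (↑(θ i) * Complex.I) -
        (z + ↑r * Complex.exp (↑(θ j) * Complex.I)) =
        (r : ℂ) * (Complex.exp (↑(θ i) * Complex.I) - Complex.exp (↑(θ j) * Complex.I)) := by
      ring
    rw [this, norm_mul, Complex.norm_real, Real.norm_eq_abs, abs_of_pos hr, chord_abs]
    have h1 : Real.sin ((θ i - θ j) / 2) = -Real.sin ((θ j - θ i) / 2) := by
      rw [show (θ i - θ j) / 2 = -((θ j - θ i) / 2) by ring, Real.sin_neg]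
    have h2 : 0 < Real.sin ((θ j - θ i) / 2) :=
      Real.sin_pos_of_pos_of_lt_pi (by linarith) (by linarith)
    rw [h1, abs_neg, abs_of_pos h2]; ring
  -- all pairwise differences are < 2π
  have hb : θ 4 - θ 0 < 2 * Real.pi := by linarith
  have pos : ∀ i j : Fin 5, θ i < θ j → θ j - θ i < 2 * Real.pi →
      0 < Real.sin ((θ j - θ i) / 2) := fun i j hij hlt =>
    Real.sin_pos_of_pos_of_lt_pi (by linarith) (by linarith)
  have d02 := hdist 0 2 (by linarith) (by linarith)
  have d34 := hdist 3 4 h34 (by linarith)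
  have d03 := hdist 0 3 (by linarith) (by linarith)
  have d24 := hdist 2 4 (by linarith) (by linarith)
  have d12 := hdist 1 2 h12 (by linarith)
  have d13 := hdist 1 3 (by linarith) (by linarith)
  have d01 := hdist 0 1 h01 (by linarith)
  have d23 := hdist 2 3 h23 (by linarith)
  rw [etaG, etaG, etaG, d02, d34, d03, d24, d12, d13, d01, d23]
  have hr' : (r : ℝ) ≠ 0 := ne_of_gt hr
  set s01 := Real.sin ((θ 1 - θ 0) / 2) with hs01
  set s12 := Real.sin ((θ 2 - θ 1) / 2) with hs12
  set s23 := Real.sin ((θ 3 - θ 2) / 2) with hs23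
  set s34 := Real.sin ((θ 4 - θ 3) / 2) with hs34
  set s02 := Real.sin ((θ 2 - θ 0) / 2) with hs02
  set s13 := Real.sin ((θ 3 - θ 1) / 2) with hs13
  set s24 := Real.sin ((θ 4 - θ 2) / 2) with hs24
  set s03 := Real.sin ((θ 3 - θ 0) / 2) with hs03
  have p01 : 0 < s01 := pos 0 1 h01 (by linarith)
  have p12 : 0 < s12 := pos 1 2 h12 (by linarith)
  have p23 : 0 < s23 := pos 2 3 h23 (by linarith)
  have p34 : 0 < s34 := pos 3 4 h34 (by linarith)
  have p02 : 0 < s02 := pos 0 2 (by linarith) (by linarith)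
  have p13 : 0 < s13 := pos 1 3 (by linarith) (by linarith)
  have p24 : 0 < s24 := pos 2 4 (by linarith) (by linarith)
  have p03 : 0 < s03 := pos 0 3 (by linarith) (by linarith)
  -- Ptolemy
  have hpt : s02 * s13 = s01 * s23 + s12 * s03 := by
    have := ptolemy_sin ((θ 1 - θ 0) / 2) ((θ 2 - θ 1) / 2) ((θ 3 - θ 2) / 2)
    rw [show (θ 1 - θ 0) / 2 + (θ 2 - θ 1) / 2 + (θ 3 - θ 2) / 2 = (θ 3 - θ 0) / 2 by ring,
      show (θ 1 - θ 0) / 2 + (θ 2 - θ 1) / 2 = (θ 2 - θ 0) / 2 by ring,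
      show (θ 2 - θ 1) / 2 + (θ 3 - θ 2) / 2 = (θ 3 - θ 1) / 2 by ring] at this
    linarith [this]
  have key : 1 - 2 * r * s01 * (2 * r * s23) / (2 * r * s02 * (2 * r * s13)) =
      s12 * s03 / (s02 * s13) := by
    field_simp
    linear_combination hpt
  rw [key]
  field_simp
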